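/- Let q ∈ (0,1], let G₁, G₂ ~ Geom(q) be i.i.d. random variables, and let k₁, k₂ be integers with k₁ < k₂. Then (k₁ + 1 − G₁)₊ + (k₂ − 1 − G₂)₊ ⪯ (k₁ − G₁)₊ + (k₂ − G₂)₊, i.e., for all z ∈ ℝ, P((k₁ + 1 − G₁)₊ + (k₂ − 1 − G₂)₊ ≥ z) ≤ P((k₁ − G₁)₊ + (k₂ − G₂)₊ ≥ z). -/

import Mathlib

open MeasureTheory ProbabilityTheory

lemma geom_tail {Ω : Type*} [MeasurableSpace Ω] (μ : Measure Ω) [IsProbabilityMeasure μ]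
    (q : ℝ) (hq0 : 0 < q) (hq1 : q ≤ 1)
    (G : Ω → ℕ) (hG : Measurable G) (hpos : ∀ ω, 1 ≤ G ω)
    (hdist : ∀ k : ℕ, 1 ≤ k → μ {ω | G ω = k} = ENNReal.ofReal ((1 - q) ^ (k - 1) * q)) :
    ∀ m : ℕ, μ {ω | m + 1 ≤ G ω} = ENNReal.ofReal ((1 - q) ^ m) := by
  have hp0 : 0 ≤ 1 - q := by linarith
  intro m
  induction m with
  | zero =>
    have h : {ω | 0 + 1 ≤ G ω} = Set.univ := by
      ext ω; simpa using hpos ω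
    simp [h]
  | succ n ih =>
    have hsplit : {ω | n + 1 ≤ G ω} = {ω | G ω = n + 1} ∪ {ω | n + 1 + 1 ≤ G ω} := by
      ext ω; simp only [Set.mem_setOf_eq, Set.mem_union]; omega
    have hdisj : Disjoint {ω | G ω = n + 1} {ω | n + 1 + 1 ≤ G ω} := by
      rw [Set.disjoint_left]; intro ω h1 h2
      simp only [Set.mem_setOf_eq] at h1 h2; omega
    have hmeas : MeasurableSet {ω | n + 1 + 1 ≤ G ω} :=
      hG ((Set.to_countable _).measurableSet)
    have hsum : μ {ω | n + 1 ≤ G ω} = μ {ω | G ω = n + 1} + μ {ω | n + 1 + 1 ≤ G ω} := by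
      rw [hsplit, measure_union hdisj hmeas]
    rw [ih, hdist (n+1) (by omega)] at hsum
    have hkey : ENNReal.ofReal ((1-q)^n) =
        ENNReal.ofReal ((1-q)^(n+1-1) * q) + ENNReal.ofReal ((1-q)^(n+1)) := by
      rw [← ENNReal.ofReal_add (mul_nonneg (pow_nonneg hp0 _) hq0.le) (pow_nonneg hp0 _)]
      congr 1
      simp only [Nat.add_sub_cancel]
      ring
    rw [hkey] at hsum
    exact (ENNReal.add_right_inj ENNReal.ofReal_ne_top).mp hsum.symm

/-- For i.i.d. `G₁, G₂ ~ Geom(q)` (on `{1, 2, …}`) and integers `k₁ < k₂`,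
`(k₁+1-G₁)₊ + (k₂-1-G₂)₊ ⪯ (k₁-G₁)₊ + (k₂-G₂)₊`. -/
theorem stmt_4 {Ω : Type*} [MeasurableSpace Ω] (μ : Measure Ω) [IsProbabilityMeasure μ]
    (q : ℝ) (hq0 : 0 < q) (hq1 : q ≤ 1)
    (G₁ G₂ : Ω → ℕ) (hG₁ : Measurable G₁) (hG₂ : Measurable G₂)
    (hG₁pos : ∀ ω, 1 ≤ G₁ ω) (hG₂pos : ∀ ω, 1 ≤ G₂ ω)
    (hdist₁ : ∀ k : ℕ, 1 ≤ k →
      μ {ω | G₁ ω = k} = ENNReal.ofReal ((1 - q) ^ (k - 1) * q))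
    (hdist₂ : ∀ k : ℕ, 1 ≤ k →
      μ {ω | G₂ ω = k} = ENNReal.ofReal ((1 - q) ^ (k - 1) * q))
    (hindep : IndepFun G₁ G₂ μ)
    (k₁ k₂ : ℤ) (hk : k₁ < k₂) :
    ∀ z : ℝ,
      μ {ω | z ≤ ((max (k₁ + 1 - (G₁ ω : ℤ)) 0 + max (k₂ - 1 - (G₂ ω : ℤ)) 0 : ℤ) : ℝ)} ≤
        μ {ω | z ≤ ((max (k₁ - (G₁ ω : ℤ)) 0 + max (k₂ - (G₂ ω : ℤ)) 0 : ℤ) : ℝ)} := by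
  intro z
  simp only [← Int.ceil_le]
  set m : ℤ := ⌈z⌉ with hm
  by_cases hm1 : m ≤ 0
  · apply measure_mono
    intro ω _
    simp only [Set.mem_setOf_eq]
    omega
  push_neg at hm1
  -- 1 ≤ m
  set Sv := {ω | m ≤ max (k₁ + 1 - (G₁ ω : ℤ)) 0 + max (k₂ - 1 - (G₂ ω : ℤ)) 0} with hSvdef
  set Su := {ω | m ≤ max (k₁ - (G₁ ω : ℤ)) 0 + max (k₂ - (G₂ ω : ℤ)) 0} with hSudef
  set E1 := {ω | (G₁ ω : ℤ) = k₁ - m + 1 ∧ (k₂ : ℤ) ≤ (G₂ ω : ℤ)} with hE1def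
  set E2 := {ω | k₁ + 1 ≤ (G₁ ω : ℤ) ∧ (G₂ ω : ℤ) = k₂ - m} with hE2def
  have hSu : MeasurableSet Su := by
    have : Su = (fun ω => (G₁ ω, G₂ ω)) ⁻¹'
        {x : ℕ × ℕ | m ≤ max (k₁ - (x.1 : ℤ)) 0 + max (k₂ - (x.2 : ℤ)) 0} := rfl
    rw [this]
    exact (hG₁.prodMk hG₂) ((Set.to_countable _).measurableSet)
  have hE2meas : MeasurableSet E2 := by
    have : E2 = (fun ω => (G₁ ω, G₂ ω)) ⁻¹'
        {x : ℕ × ℕ | k₁ + 1 ≤ (x.1 : ℤ) ∧ (x.2 : ℤ) = k₂ - m} := rfl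
    rw [this]
    exact (hG₁.prodMk hG₂) ((Set.to_countable _).measurableSet)
  have hsub1 : Sv \ Su ⊆ E1 := by
    rintro ω ⟨h1, h2⟩
    simp only [hSvdef, Set.mem_setOf_eq] at h1
    simp only [hSudef, Set.mem_setOf_eq] at h2
    simp only [hE1def, Set.mem_setOf_eq]
    omega
  have hsub2 : E2 ⊆ Su \ Sv := by
    rintro ω ⟨h1, h2⟩
    constructor
    · simp only [hSudef, Set.mem_setOf_eq]; omega
    · simp only [hSvdef, Set.mem_setOf_eq]; omega
  -- core: μ E1 ≤ μ E2
  have hcore : μ E1 ≤ μ E2 := by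
    by_cases hk1m : k₁ - m + 1 ≤ 0
    · have : E1 = ∅ := by
        rw [Set.eq_empty_iff_forall_notMem]
        rintro ω ⟨h1, _⟩
        have := hG₁pos ω
        omega
      simp [this]
    push_neg at hk1m
    obtain ⟨a, ha⟩ : ∃ a : ℕ, (a : ℤ) = k₁ - m + 1 := ⟨(k₁ - m + 1).toNat, by omega⟩
    obtain ⟨b, hb⟩ : ∃ b : ℕ, (b : ℤ) = k₂ - m := ⟨(k₂ - m).toNat, by omega⟩
    obtain ⟨K₁, hK₁⟩ : ∃ n : ℕ, (n : ℤ) = k₁ := ⟨k₁.toNat, by omega⟩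
    obtain ⟨K₂, hK₂⟩ : ∃ n : ℕ, (n : ℤ) = k₂ := ⟨k₂.toNat, by omega⟩
    have hE1eq : E1 = G₁ ⁻¹' {a} ∩ G₂ ⁻¹' {n | K₂ ≤ n} := by
      ext ω
      simp only [hE1def, Set.mem_setOf_eq, Set.mem_inter_iff, Set.mem_preimage,
        Set.mem_singleton_iff]
      omega
    have hE2eq : E2 = G₁ ⁻¹' {n | K₁ + 1 ≤ n} ∩ G₂ ⁻¹' {b} := by
      ext ω
      simp only [hE2def, Set.mem_setOf_eq, Set.mem_inter_iff, Set.mem_preimage,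
        Set.mem_singleton_iff]
      omega
    have hp1 : G₁ ⁻¹' {a} = {ω | G₁ ω = a} := by ext ω; simp
    have hp2 : G₂ ⁻¹' {n | K₂ ≤ n} = {ω | K₂ - 1 + 1 ≤ G₂ ω} := by
      ext ω; simp only [Set.mem_preimage, Set.mem_setOf_eq]; omega
    have hp3 : G₁ ⁻¹' {n | K₁ + 1 ≤ n} = {ω | K₁ + 1 ≤ G₁ ω} := rfl
    have hp4 : G₂ ⁻¹' {b} = {ω | G₂ ω = b} := by ext ω; simp
    have hmu1 : μ E1 = μ {ω | G₁ ω = a} * μ {ω | K₂ - 1 + 1 ≤ G₂ ω} := by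
      rw [hE1eq, hindep.measure_inter_preimage_eq_mul _ _
        ((Set.to_countable _).measurableSet) ((Set.to_countable _).measurableSet),
        hp1, hp2]
    have hmu2 : μ E2 = μ {ω | K₁ + 1 ≤ G₁ ω} * μ {ω | G₂ ω = b} := by
      rw [hE2eq, hindep.measure_inter_preimage_eq_mul _ _
        ((Set.to_countable _).measurableSet) ((Set.to_countable _).measurableSet),
        hp3, hp4]
    rw [hmu1, hmu2, hdist₁ a (by omega), hdist₂ b (by omega),
      geom_tail μ q hq0 hq1 G₂ hG₂ hG₂pos hdist₂ (K₂ - 1),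
      geom_tail μ q hq0 hq1 G₁ hG₁ hG₁pos hdist₁ K₁]
    have hp0 : (0:ℝ) ≤ 1 - q := by linarith
    rw [← ENNReal.ofReal_mul (by positivity), ← ENNReal.ofReal_mul (by positivity)]
    have hxy : (1-q) ^ (a-1) * q * (1-q) ^ (K₂-1) = (1-q) ^ K₁ * ((1-q) ^ (b-1) * q) := by
      have he : a-1+(K₂-1) = K₁+(b-1) := by omega
      calc (1-q) ^ (a-1) * q * (1-q) ^ (K₂-1) = q * (1-q) ^ (a-1+(K₂-1)) := by ring
        _ = q * (1-q) ^ (K₁+(b-1)) := by rw [he]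
        _ = (1-q) ^ K₁ * ((1-q) ^ (b-1) * q) := by ring
    rw [hxy]
  -- assemble
  calc μ Sv = μ (Sv ∩ Su) + μ (Sv \ Su) := (measure_inter_add_diff Sv hSu).symm
    _ ≤ μ (Sv ∩ Su) + μ E1 := add_le_add_right (measure_mono hsub1) _
    _ ≤ μ (Sv ∩ Su) + μ E2 := add_le_add_right hcore _
    _ = μ ((Sv ∩ Su) ∪ E2) := by
        rw [measure_union _ hE2meas]
        rw [Set.disjoint_left]
        intro ω hω hω2
        exact (hsub2 hω2).2 hω.1
    _ ≤ μ Su := by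
        apply measure_mono
        rintro ω (h | h)
        · exact h.2
        · exact (hsub2 h).1
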